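/- (Isolated singularities are removable.) Assume i₁, i₂, i₃ are linearly independent over ℝ and f₁(E₃) = f₂(E₃) = ℂ. Let ζ₀ ∈ E₃, ξ₁₀ = f₁(ζ₀), ξ₂₀ = f₂(ζ₀), 0 < R ≤ ∞. Let F₁, F₃ be holomorphic on {ξ : 0 < |ξ − ξ₁₀| < R} and F₂, F₄ holomorphic on {ξ : 0 < |ξ − ξ₂₀| < R}, and define Φ on K⁰_ζ = {ζ ∈ E₃ : 0 < |f₁(ζ) − ξ₁₀| < R, 0 < |f₂(ζ) − ξ₂₀| < R} by Φ(ζ) = F₁(f₁(ζ))e₁ + F₂(f₂(ζ))e₂ + F₃(f₁(ζ))e₃ + F₄(f₂(ζ))e₄. If Φ has a finite limit (as ζ → w within K⁰_ζ) at every point w ≠ ζ₀ of K̃⁰_ζ ∩ (ζ₀ + (L¹_ζ ∪ L²_ζ)), where K̃⁰_ζ = {ζ ∈ E₃ : |f₁(ζ) − ξ₁₀| < R, |f₂(ζ) − ξ₂₀| < R}, then Φ also has a finite limit at ζ₀ as ζ → ζ₀ within K⁰_ζ; that is, an isolated singular point of Φ can only be removable. -/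

import Mathlib

noncomputable section

/-- The algebra of complex quaternions ℍ(ℂ): quaternions over ℂ with
I² = J² = K² = -1, IJ = -JI = K, JK = -KJ = I, KI = -IK = J. -/
abbrev HC : Type := Quaternion ℂ

/-- The quaternion unit I. -/
def Iq : HC := ⟨0, 1, 0, 0⟩
/-- The quaternion unit J. -/
def Jq : HC := ⟨0, 0, 1, 0⟩
/-- The quaternion unit K. -/
def Kq : HC := ⟨0, 0, 0, 1⟩

/-- e₁ = (1 + iI)/2. -/
def e1 : HC := (2 : ℂ)⁻¹ • (1 + Complex.I • Iq)
/-- e₂ = (1 - iI)/2. -/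
def e2 : HC := (2 : ℂ)⁻¹ • (1 - Complex.I • Iq)
/-- e₃ = (iJ - K)/2. -/
def e3 : HC := (2 : ℂ)⁻¹ • (Complex.I • Jq - Kq)
/-- e₄ = (iJ + K)/2. -/
def e4 : HC := (2 : ℂ)⁻¹ • (Complex.I • Jq + Kq)

/-- The coefficient c₁ of q in the basis {e₁,e₂,e₃,e₄} (q = c₁e₁ + c₂e₂ + c₃e₃ + c₄e₄). -/
def coord1 (q : HC) : ℂ := q.re - Complex.I * q.imI
/-- The coefficient c₂ of q in the basis {e₁,e₂,e₃,e₄}. -/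
def coord2 (q : HC) : ℂ := q.re + Complex.I * q.imI
/-- The coefficient c₃ of q in the basis {e₁,e₂,e₃,e₄}. -/
def coord3 (q : HC) : ℂ := -(Complex.I * q.imJ) - q.imK
/-- The coefficient c₄ of q in the basis {e₁,e₂,e₃,e₄}. -/
def coord4 (q : HC) : ℂ := -(Complex.I * q.imJ) + q.imK

/-- The norm ‖c‖ = √(|c₁|² + |c₂|² + |c₃|² + |c₄|²) of c = c₁e₁ + c₂e₂ + c₃e₃ + c₄e₄. -/
def hnorm (q : HC) : ℝ :=
  Real.sqrt (‖coord1 q‖ ^ 2 + ‖coord2 q‖ ^ 2 +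
    ‖coord3 q‖ ^ 2 + ‖coord4 q‖ ^ 2)

/-- i₂ = a₁e₁ + a₂e₂. -/
def i2 (a₁ a₂ : ℂ) : HC := a₁ • e1 + a₂ • e2
/-- i₃ = b₁e₁ + b₂e₂. -/
def i3 (b₁ b₂ : ℂ) : HC := b₁ • e1 + b₂ • e2

/-- ζ = x·i₁ + y·i₂ + z·i₃ with i₁ = 1. -/
def zeta (a₁ a₂ b₁ b₂ : ℂ) (x y z : ℝ) : HC :=
  (x : ℂ) • (1 : HC) + (y : ℂ) • i2 a₁ a₂ + (z : ℂ) • i3 b₁ b₂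

/-- E₃ = {x i₁ + y i₂ + z i₃ : x, y, z ∈ ℝ}. -/
def E3 (a₁ a₂ b₁ b₂ : ℂ) : Set HC :=
  {q | ∃ x y z : ℝ, q = zeta a₁ a₂ b₁ b₂ x y z}

/-- ξ₁ = f₁(ζ) = x + y a₁ + z b₁. -/
def xi1 (a₁ b₁ : ℂ) (x y z : ℝ) : ℂ := (x : ℂ) + (y : ℂ) * a₁ + (z : ℂ) * b₁
/-- ξ₂ = f₂(ζ) = x + y a₂ + z b₂. -/
def xi2 (a₂ b₂ : ℂ) (x y z : ℝ) : ℂ := (x : ℂ) + (y : ℂ) * a₂ + (z : ℂ) * b₂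


/-- The punctured domain K⁰_ζ = {ζ ∈ E₃ : 0 < |f₁(ζ)-ξ₁₀| < R, 0 < |f₂(ζ)-ξ₂₀| < R}. -/
def K0 (a₁ a₂ b₁ b₂ ξ₁₀ ξ₂₀ : ℂ) (R : ENNReal) : Set HC :=
  {q | ∃ x y z : ℝ, q = zeta a₁ a₂ b₁ b₂ x y z ∧
    0 < ‖xi1 a₁ b₁ x y z - ξ₁₀‖ ∧
    ENNReal.ofReal (‖xi1 a₁ b₁ x y z - ξ₁₀‖) < R ∧
    0 < ‖xi2 a₂ b₂ x y z - ξ₂₀‖ ∧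
    ENNReal.ofReal (‖xi2 a₂ b₂ x y z - ξ₂₀‖) < R}

/-- Φ has the finite limit A as ζ → w with ζ ranging over S (w.r.t. the norm of ℍ(ℂ)). -/
def TendstoAt (Φ : HC → HC) (S : Set HC) (w A : HC) : Prop :=
  ∀ ε > (0 : ℝ), ∃ δ > (0 : ℝ), ∀ q ∈ S, hnorm (q - w) < δ → hnorm (Φ q - A) < ε

/-- ‖Φ(ζ)‖ → ∞ as ζ → w with ζ ranging over S. -/
def TendstoInftyAt (Φ : HC → HC) (S : Set HC) (w : HC) : Prop :=
  ∀ M : ℝ, ∃ δ > (0 : ℝ), ∀ q ∈ S, hnorm (q - w) < δ → M < hnorm (Φ q)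

/- ===== auxiliary lemmas ===== -/

open Quaternion in
lemma combo_mk (c₁ c₂ c₃ c₄ : ℂ) :
    c₁ • e1 + c₂ • e2 + c₃ • e3 + c₄ • e4 =
      (⟨(c₁+c₂)/2, Complex.I*(c₁-c₂)/2, Complex.I*(c₃+c₄)/2, (c₄-c₃)/2⟩ : HC) := by
  ext <;> simp [e1, e2, e3, e4, Quaternion.ext_iff] <;> simp [Iq, Jq, Kq] <;> ring

lemma zeta_eq (a₁ a₂ b₁ b₂ : ℂ) (x y z : ℝ) :
    zeta a₁ a₂ b₁ b₂ x y z = xi1 a₁ b₁ x y z • e1 + xi2 a₂ b₂ x y z • e2 := by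
  simp only [zeta, i2, i3, xi1, xi2, smul_add, smul_smul]
  have h1 : (1 : HC) = (1:ℂ) • e1 + (1:ℂ) • e2 := by
    ext <;> simp [e1, e2, Quaternion.ext_iff] <;> simp [Iq] <;> ring
  rw [h1]
  module

lemma coord1_combo (c₁ c₂ c₃ c₄ : ℂ) : coord1 (c₁ • e1 + c₂ • e2 + c₃ • e3 + c₄ • e4) = c₁ := by
  rw [combo_mk]; simp [coord1]; ring_nf; simp [Complex.I_sq]; ring

lemma coord2_combo (c₁ c₂ c₃ c₄ : ℂ) : coord2 (c₁ • e1 + c₂ • e2 + c₃ • e3 + c₄ • e4) = c₂ := by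
  rw [combo_mk]; simp [coord2]; ring_nf; simp [Complex.I_sq]; ring

lemma coord3_combo (c₁ c₂ c₃ c₄ : ℂ) : coord3 (c₁ • e1 + c₂ • e2 + c₃ • e3 + c₄ • e4) = c₃ := by
  rw [combo_mk]; simp [coord3]; ring_nf; simp [Complex.I_sq]; ring

lemma coord4_combo (c₁ c₂ c₃ c₄ : ℂ) : coord4 (c₁ • e1 + c₂ • e2 + c₃ • e3 + c₄ • e4) = c₄ := by
  rw [combo_mk]; simp [coord4]; ring_nf; simp [Complex.I_sq]; ring

lemma coord1_sub (p q : HC) : coord1 (p - q) = coord1 p - coord1 q := by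
  simp [coord1]; ring
lemma coord2_sub (p q : HC) : coord2 (p - q) = coord2 p - coord2 q := by
  simp [coord2]; ring
lemma coord3_sub (p q : HC) : coord3 (p - q) = coord3 p - coord3 q := by
  simp [coord3]; ring
lemma coord4_sub (p q : HC) : coord4 (p - q) = coord4 p - coord4 q := by
  simp [coord4]; ring

lemma abs_coord1_le (q : HC) : ‖coord1 q‖ ≤ hnorm q := by
  rw [hnorm, Real.le_sqrt (norm_nonneg _)]
  nlinarith [sq_nonneg (‖coord1 q‖), sq_nonneg (‖coord2 q‖),
    sq_nonneg (‖coord3 q‖), sq_nonneg (‖coord4 q‖)]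
  positivity

lemma abs_coord2_le (q : HC) : ‖coord2 q‖ ≤ hnorm q := by
  rw [hnorm, Real.le_sqrt (norm_nonneg _)]
  nlinarith [sq_nonneg (‖coord1 q‖), sq_nonneg (‖coord2 q‖),
    sq_nonneg (‖coord3 q‖), sq_nonneg (‖coord4 q‖)]
  positivity

lemma abs_coord3_le (q : HC) : ‖coord3 q‖ ≤ hnorm q := by
  rw [hnorm, Real.le_sqrt (norm_nonneg _)]
  nlinarith [sq_nonneg (‖coord1 q‖), sq_nonneg (‖coord2 q‖),
    sq_nonneg (‖coord3 q‖), sq_nonneg (‖coord4 q‖)]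
  positivity

lemma abs_coord4_le (q : HC) : ‖coord4 q‖ ≤ hnorm q := by
  rw [hnorm, Real.le_sqrt (norm_nonneg _)]
  nlinarith [sq_nonneg (‖coord1 q‖), sq_nonneg (‖coord2 q‖),
    sq_nonneg (‖coord3 q‖), sq_nonneg (‖coord4 q‖)]
  positivity

lemma hnorm_combo (c₁ c₂ c₃ c₄ : ℂ) :
    hnorm (c₁ • e1 + c₂ • e2 + c₃ • e3 + c₄ • e4) =
      Real.sqrt (‖c₁‖ ^ 2 + ‖c₂‖ ^ 2 +
        ‖c₃‖ ^ 2 + ‖c₄‖ ^ 2) := by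
  rw [hnorm, coord1_combo, coord2_combo, coord3_combo, coord4_combo]

lemma hnorm_pair (c₁ c₂ : ℂ) :
    hnorm (c₁ • e1 + c₂ • e2) = Real.sqrt (‖c₁‖ ^ 2 + ‖c₂‖ ^ 2) := by
  have h : c₁ • e1 + c₂ • e2 = c₁ • e1 + c₂ • e2 + (0:ℂ) • e3 + (0:ℂ) • e4 := by module
  rw [h, hnorm_combo]; simp

lemma hnorm_pair_le (c₁ c₂ : ℂ) :
    hnorm (c₁ • e1 + c₂ • e2) ≤ ‖c₁‖ + ‖c₂‖ := by
  rw [hnorm_pair]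
  have h1 := norm_nonneg c₁; have h2 := norm_nonneg c₂
  have h : ‖c₁‖ ^ 2 + ‖c₂‖ ^ 2 ≤ (‖c₁‖ + ‖c₂‖) ^ 2 := by
    nlinarith
  calc Real.sqrt (‖c₁‖ ^ 2 + ‖c₂‖ ^ 2)
      ≤ Real.sqrt ((‖c₁‖ + ‖c₂‖) ^ 2) := Real.sqrt_le_sqrt h
    _ = ‖c₁‖ + ‖c₂‖ := Real.sqrt_sq (by positivity)

lemma abs1_le_hnorm_pair (c₁ c₂ : ℂ) : ‖c₁‖ ≤ hnorm (c₁ • e1 + c₂ • e2) := by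
  have h : c₁ • e1 + c₂ • e2 = c₁ • e1 + c₂ • e2 + (0:ℂ) • e3 + (0:ℂ) • e4 := by module
  calc ‖c₁‖ = ‖coord1 (c₁ • e1 + c₂ • e2)‖ := by
        rw [h, coord1_combo]
    _ ≤ _ := abs_coord1_le _

lemma abs2_le_hnorm_pair (c₁ c₂ : ℂ) : ‖c₂‖ ≤ hnorm (c₁ • e1 + c₂ • e2) := by
  have h : c₁ • e1 + c₂ • e2 = c₁ • e1 + c₂ • e2 + (0:ℂ) • e3 + (0:ℂ) • e4 := by module
  calc ‖c₂‖ = ‖coord2 (c₁ • e1 + c₂ • e2)‖ := by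
        rw [h, coord2_combo]
    _ ≤ _ := abs_coord2_le _

lemma zeta_sub (a₁ a₂ b₁ b₂ : ℂ) (x y z x' y' z' : ℝ) :
    zeta a₁ a₂ b₁ b₂ x y z - zeta a₁ a₂ b₁ b₂ x' y' z' =
      zeta a₁ a₂ b₁ b₂ (x - x') (y - y') (z - z') := by
  simp only [zeta]; push_cast; module

lemma zeta_add (a₁ a₂ b₁ b₂ : ℂ) (x y z x' y' z' : ℝ) :
    zeta a₁ a₂ b₁ b₂ x y z + zeta a₁ a₂ b₁ b₂ x' y' z' =
      zeta a₁ a₂ b₁ b₂ (x + x') (y + y') (z + z') := by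
  simp only [zeta]; push_cast; module

lemma xi1_sub (a b : ℂ) (x y z x' y' z' : ℝ) :
    xi1 a b x y z - xi1 a b x' y' z' = xi1 a b (x - x') (y - y') (z - z') := by
  simp only [xi1]; push_cast; ring

lemma xi2_sub (a b : ℂ) (x y z x' y' z' : ℝ) :
    xi2 a b x y z - xi2 a b x' y' z' = xi2 a b (x - x') (y - y') (z - z') := by
  simp only [xi2]; push_cast; ring

lemma xi1_smul (a b : ℂ) (s u v t : ℝ) :
    xi1 a b (s*u) (s*v) (s*t) = (s:ℂ) * xi1 a b u v t := by
  simp only [xi1]; push_cast; ring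

lemma xi2_smul (a b : ℂ) (s u v t : ℝ) :
    xi2 a b (s*u) (s*v) (s*t) = (s:ℂ) * xi2 a b u v t := by
  simp only [xi2]; push_cast; ring

lemma xi1_comb (a b : ℂ) (x₀ y₀ z₀ u v t p1 p2 p3 q1 q2 q3 r1 r2 : ℝ) :
    xi1 a b (x₀ + u + r1*p1 + r2*q1) (y₀ + v + r1*p2 + r2*q2) (z₀ + t + r1*p3 + r2*q3) =
      xi1 a b x₀ y₀ z₀ + xi1 a b u v t +
        (r1:ℂ) * xi1 a b p1 p2 p3 + (r2:ℂ) * xi1 a b q1 q2 q3 := by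
  simp only [xi1]; push_cast; ring

lemma xi2_comb (a b : ℂ) (x₀ y₀ z₀ u v t p1 p2 p3 q1 q2 q3 r1 r2 : ℝ) :
    xi2 a b (x₀ + u + r1*p1 + r2*q1) (y₀ + v + r1*p2 + r2*q2) (z₀ + t + r1*p3 + r2*q3) =
      xi2 a b x₀ y₀ z₀ + xi2 a b u v t +
        (r1:ℂ) * xi2 a b p1 p2 p3 + (r2:ℂ) * xi2 a b q1 q2 q3 := by
  simp only [xi2]; push_cast; ring

lemma xi1_comb2 (a b : ℂ) (p1 p2 p3 q1 q2 q3 r1 r2 : ℝ) :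
    xi1 a b (r1*p1 + r2*q1) (r1*p2 + r2*q2) (r1*p3 + r2*q3) =
      (r1:ℂ) * xi1 a b p1 p2 p3 + (r2:ℂ) * xi1 a b q1 q2 q3 := by
  simp only [xi1]; push_cast; ring

lemma xi2_comb2 (a b : ℂ) (p1 p2 p3 q1 q2 q3 r1 r2 : ℝ) :
    xi2 a b (r1*p1 + r2*q1) (r1*p2 + r2*q2) (r1*p3 + r2*q3) =
      (r1:ℂ) * xi2 a b p1 p2 p3 + (r2:ℂ) * xi2 a b q1 q2 q3 := by
  simp only [xi2]; push_cast; ring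

/-- a nonzero real kernel element of (x,y,z) ↦ x + y a + z b. -/
lemma exists_ker (a b : ℂ) :
    ∃ u v t : ℝ, (u:ℂ) + (v:ℂ)*a + (t:ℂ)*b = 0 ∧ ¬(u = 0 ∧ v = 0 ∧ t = 0) := by
  by_cases h : a.im = 0 ∧ b.im = 0
  · refine ⟨-a.re, 1, 0, ?_, ?_⟩
    · simp [Complex.ext_iff, h.1]
    · rintro ⟨-, h1, -⟩; exact one_ne_zero h1
  · refine ⟨a.im*b.re - b.im*a.re, b.im, -a.im, ?_, ?_⟩
    · simp only [Complex.ext_iff, Complex.add_re, Complex.add_im, Complex.mul_re,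
        Complex.mul_im, Complex.ofReal_re, Complex.ofReal_im, Complex.zero_re, Complex.zero_im]
      constructor <;> ring
    · rintro ⟨-, h2, h3⟩
      exact h ⟨by simpa using h3, h2⟩

/- ===== main theorem ===== -/

set_option maxHeartbeats 2000000 in
/-- Isolated singularities are removable: if Φ has a finite limit at
every point w ≠ ζ₀ of K̃⁰_ζ ∩ (ζ₀ + (L¹_ζ ∪ L²_ζ)), then Φ also has a finite limit at
ζ₀; an isolated singular point of a G-monogenic mapping can only be removable. -/
theorem isolated_singularity_removable
    (a₁ a₂ b₁ b₂ : ℂ)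
    (hind : ∀ α β γ : ℝ,
      (α : ℂ) • (1 : HC) + (β : ℂ) • i2 a₁ a₂ + (γ : ℂ) • i3 b₁ b₂ = 0 →
        α = 0 ∧ β = 0 ∧ γ = 0)
    (hsurj1 : ∀ w : ℂ, ∃ x y z : ℝ, w = xi1 a₁ b₁ x y z)
    (hsurj2 : ∀ w : ℂ, ∃ x y z : ℝ, w = xi2 a₂ b₂ x y z)
    (x₀ y₀ z₀ : ℝ) (R : ENNReal) (hR : 0 < R)
    (F₁ F₂ F₃ F₄ : ℂ → ℂ)
    (hF₁ : DifferentiableOn ℂ F₁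
      {ξ : ℂ | 0 < ‖ξ - xi1 a₁ b₁ x₀ y₀ z₀‖ ∧
        ENNReal.ofReal (‖ξ - xi1 a₁ b₁ x₀ y₀ z₀‖) < R})
    (hF₃ : DifferentiableOn ℂ F₃
      {ξ : ℂ | 0 < ‖ξ - xi1 a₁ b₁ x₀ y₀ z₀‖ ∧
        ENNReal.ofReal (‖ξ - xi1 a₁ b₁ x₀ y₀ z₀‖) < R})
    (hF₂ : DifferentiableOn ℂ F₂
      {ξ : ℂ | 0 < ‖ξ - xi2 a₂ b₂ x₀ y₀ z₀‖ ∧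
        ENNReal.ofReal (‖ξ - xi2 a₂ b₂ x₀ y₀ z₀‖) < R})
    (hF₄ : DifferentiableOn ℂ F₄
      {ξ : ℂ | 0 < ‖ξ - xi2 a₂ b₂ x₀ y₀ z₀‖ ∧
        ENNReal.ofReal (‖ξ - xi2 a₂ b₂ x₀ y₀ z₀‖) < R})
    (Φ : HC → HC)
    (hΦ : ∀ x y z : ℝ,
      0 < ‖xi1 a₁ b₁ x y z - xi1 a₁ b₁ x₀ y₀ z₀‖ →
      ENNReal.ofReal (‖xi1 a₁ b₁ x y z - xi1 a₁ b₁ x₀ y₀ z₀‖) < R →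
      0 < ‖xi2 a₂ b₂ x y z - xi2 a₂ b₂ x₀ y₀ z₀‖ →
      ENNReal.ofReal (‖xi2 a₂ b₂ x y z - xi2 a₂ b₂ x₀ y₀ z₀‖) < R →
      Φ (zeta a₁ a₂ b₁ b₂ x y z) =
        F₁ (xi1 a₁ b₁ x y z) • e1 + F₂ (xi2 a₂ b₂ x y z) • e2 +
        F₃ (xi1 a₁ b₁ x y z) • e3 + F₄ (xi2 a₂ b₂ x y z) • e4)
    (hlim : ∀ u v t : ℝ, (xi1 a₁ b₁ u v t = 0 ∨ xi2 a₂ b₂ u v t = 0) →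
      ENNReal.ofReal (‖xi1 a₁ b₁ u v t‖) < R →
      ENNReal.ofReal (‖xi2 a₂ b₂ u v t‖) < R →
      zeta a₁ a₂ b₁ b₂ u v t ≠ 0 →
      ∃ A : HC, TendstoAt Φ (K0 a₁ a₂ b₁ b₂ (xi1 a₁ b₁ x₀ y₀ z₀) (xi2 a₂ b₂ x₀ y₀ z₀) R)
        (zeta a₁ a₂ b₁ b₂ x₀ y₀ z₀ + zeta a₁ a₂ b₁ b₂ u v t) A) :
    ∃ A : HC, TendstoAt Φ (K0 a₁ a₂ b₁ b₂ (xi1 a₁ b₁ x₀ y₀ z₀) (xi2 a₂ b₂ x₀ y₀ z₀) R) (zeta a₁ a₂ b₁ b₂ x₀ y₀ z₀) A := by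
  classical
  -- a convenient small real radius
  obtain ⟨r₀, hr₀, hr₀R⟩ : ∃ r₀ : ℝ, 0 < r₀ ∧ ∀ x : ℝ, x ≤ 4*r₀ → ENNReal.ofReal x < R := by
    rcases eq_or_ne R ⊤ with h | h
    · exact ⟨1, one_pos, fun x _ => h ▸ ENNReal.ofReal_lt_top⟩
    · have hRt : 0 < R.toReal := ENNReal.toReal_pos hR.ne' h
      refine ⟨R.toReal/8, by positivity, fun x hx => ?_⟩
      rcases le_or_gt x 0 with hx0 | hx0
      · simpa [ENNReal.ofReal_eq_zero.mpr hx0] using hR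
      · rw [ENNReal.ofReal_lt_iff_lt_toReal hx0.le h]; linarith
  ------------------------------------------------------------------
  -- SIDE 1 : a singular point on the line L¹ and the limit of F₁, F₃
  ------------------------------------------------------------------
  obtain ⟨u, v, t, hkerraw, hne⟩ := exists_ker a₁ b₁
  have hker1 : xi1 a₁ b₁ u v t = 0 := hkerraw
  have hτ0 : xi2 a₂ b₂ u v t ≠ 0 := by
    intro h
    apply hne
    apply hind
    show zeta a₁ a₂ b₁ b₂ u v t = 0
    rw [zeta_eq, hker1, h]
    module
  set τa := ‖xi2 a₂ b₂ u v t‖ with hτadef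
  have hτap : 0 < τa := norm_pos_iff.mpr hτ0
  set s1 := r₀ / (2 * τa) with hs1def
  have hs1p : 0 < s1 := by rw [hs1def]; positivity
  have h1z : xi1 a₁ b₁ (s1*u) (s1*v) (s1*t) = 0 := by rw [xi1_smul, hker1, mul_zero]
  have h2v : xi2 a₂ b₂ (s1*u) (s1*v) (s1*t) = (s1:ℂ) * xi2 a₂ b₂ u v t :=
    xi2_smul _ _ _ _ _ _
  have h2abs : ‖xi2 a₂ b₂ (s1*u) (s1*v) (s1*t)‖ = r₀/2 := by
    rw [h2v, norm_mul, Complex.norm_real, Real.norm_eq_abs, abs_of_pos hs1p, ← hτadef, hs1def]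
    field_simp
  have hzne1 : zeta a₁ a₂ b₁ b₂ (s1*u) (s1*v) (s1*t) ≠ 0 := by
    intro h0
    obtain ⟨hu, hv, ht⟩ := hind (s1*u) (s1*v) (s1*t) h0
    exact hne ⟨(mul_eq_zero.mp hu).resolve_left hs1p.ne',
      (mul_eq_zero.mp hv).resolve_left hs1p.ne',
      (mul_eq_zero.mp ht).resolve_left hs1p.ne'⟩
  obtain ⟨A₁, hA₁⟩ := hlim (s1*u) (s1*v) (s1*t) (Or.inl h1z)
    (by rw [h1z]; simpa using hR)
    (by rw [h2abs]; exact hr₀R _ (by linarith))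
    hzne1
  obtain ⟨p1, p2, p3, hp⟩ := hsurj1 1
  obtain ⟨q1, q2, q3, hq⟩ := hsurj1 Complex.I
  set C1 := ‖xi2 a₂ b₂ p1 p2 p3‖ + ‖xi2 a₂ b₂ q1 q2 q3‖ + 1 with hC1def
  have hC1p : 1 ≤ C1 := by
    have h3 := norm_nonneg (xi2 a₂ b₂ p1 p2 p3)
    have h4 := norm_nonneg (xi2 a₂ b₂ q1 q2 q3)
    rw [hC1def]; linarith
  have hC1pos : (0:ℝ) < C1 := by linarith
  have key1 : ∀ ε > (0:ℝ), ∃ δ > (0:ℝ), ∀ ξ : ℂ,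
      0 < ‖ξ - xi1 a₁ b₁ x₀ y₀ z₀‖ →
      ‖ξ - xi1 a₁ b₁ x₀ y₀ z₀‖ < δ →
      ‖F₁ ξ - coord1 A₁‖ < ε ∧ ‖F₃ ξ - coord3 A₁‖ < ε := by
    intro ε hε
    obtain ⟨δ₁, hδ₁p, hδ₁⟩ := hA₁ ε hε
    refine ⟨min (δ₁ / (C1+1)) (min r₀ (r₀ / (4*C1))), by positivity, fun ξ hξpos hξlt => ?_⟩
    have hδa : ‖ξ - xi1 a₁ b₁ x₀ y₀ z₀‖ < δ₁ / (C1+1) :=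
      lt_of_lt_of_le hξlt (min_le_left _ _)
    have hδb : ‖ξ - xi1 a₁ b₁ x₀ y₀ z₀‖ < r₀ :=
      lt_of_lt_of_le hξlt ((min_le_right _ _).trans (min_le_left _ _))
    have hδc : ‖ξ - xi1 a₁ b₁ x₀ y₀ z₀‖ < r₀ / (4*C1) :=
      lt_of_lt_of_le hξlt ((min_le_right _ _).trans (min_le_right _ _))
    set η := ξ - xi1 a₁ b₁ x₀ y₀ z₀ with hη
    set X := x₀ + s1*u + η.re*p1 + η.im*q1 with hX
    set Y := y₀ + s1*v + η.re*p2 + η.im*q2 with hY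
    set Z := z₀ + s1*t + η.re*p3 + η.im*q3 with hZ
    have hXxi1 : xi1 a₁ b₁ X Y Z = ξ := by
      rw [hX, hY, hZ, xi1_comb, h1z, ← hp, ← hq]
      have h := Complex.re_add_im η
      linear_combination h + hη
    set g := (η.re:ℂ) * xi2 a₂ b₂ p1 p2 p3 + (η.im:ℂ) * xi2 a₂ b₂ q1 q2 q3 with hg
    have hXxi2 : xi2 a₂ b₂ X Y Z - xi2 a₂ b₂ x₀ y₀ z₀ =
        (s1:ℂ) * xi2 a₂ b₂ u v t + g := by
      rw [hX, hY, hZ, xi2_comb, h2v, hg]; ring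
    have habsg : ‖g‖ ≤ C1 * ‖η‖ := by
      rw [hg]
      calc ‖(η.re:ℂ) * xi2 a₂ b₂ p1 p2 p3 + (η.im:ℂ) * xi2 a₂ b₂ q1 q2 q3‖
          ≤ ‖(η.re:ℂ) * xi2 a₂ b₂ p1 p2 p3‖ +
            ‖(η.im:ℂ) * xi2 a₂ b₂ q1 q2 q3‖ := norm_add_le _ _
        _ = |η.re| * ‖xi2 a₂ b₂ p1 p2 p3‖ +
            |η.im| * ‖xi2 a₂ b₂ q1 q2 q3‖ := by
            rw [norm_mul, norm_mul, Complex.norm_real, Complex.norm_real, Real.norm_eq_abs, Real.norm_eq_abs]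
        _ ≤ C1 * ‖η‖ := by
            have h1 := Complex.abs_re_le_norm η
            have h2 := Complex.abs_im_le_norm η
            have h3 := norm_nonneg (xi2 a₂ b₂ p1 p2 p3)
            have h4 := norm_nonneg (xi2 a₂ b₂ q1 q2 q3)
            have h5 := norm_nonneg η
            have h6 := abs_nonneg η.re
            have h7 := abs_nonneg η.im
            rw [hC1def]
            nlinarith [mul_le_mul_of_nonneg_right h1 h3, mul_le_mul_of_nonneg_right h2 h4]
    have habsg' : ‖g‖ < r₀ / 4 := by
      have h := mul_lt_mul_of_pos_left hδc hC1pos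
      have h2 : C1 * (r₀ / (4*C1)) = r₀/4 := by field_simp
      calc ‖g‖ ≤ C1 * ‖η‖ := habsg
        _ < C1 * (r₀ / (4*C1)) := h
        _ = r₀/4 := h2
    have habs_sτ : ‖(s1:ℂ) * xi2 a₂ b₂ u v t‖ = r₀/2 := by
      rw [← h2v]; exact h2abs
    have hDlow : r₀/4 ≤ ‖(s1:ℂ) * xi2 a₂ b₂ u v t + g‖ := by
      have h := norm_add_le ((s1:ℂ) * xi2 a₂ b₂ u v t + g) (-g)
      rw [show (s1:ℂ) * xi2 a₂ b₂ u v t + g + -g = (s1:ℂ) * xi2 a₂ b₂ u v t by ring,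
        norm_neg, habs_sτ] at h
      linarith [habsg'.le]
    have hDup : ‖(s1:ℂ) * xi2 a₂ b₂ u v t + g‖ ≤ r₀ := by
      calc ‖(s1:ℂ) * xi2 a₂ b₂ u v t + g‖
          ≤ ‖(s1:ℂ) * xi2 a₂ b₂ u v t‖ + ‖g‖ := norm_add_le _ _
        _ ≤ r₀/2 + r₀/4 := by rw [habs_sτ]; linarith [habsg'.le]
        _ ≤ r₀ := by linarith
    have c1 : 0 < ‖xi1 a₁ b₁ X Y Z - xi1 a₁ b₁ x₀ y₀ z₀‖ := by
      rw [hXxi1, ← hη]; exact hξpos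
    have c2 : ENNReal.ofReal (‖xi1 a₁ b₁ X Y Z - xi1 a₁ b₁ x₀ y₀ z₀‖) < R := by
      rw [hXxi1, ← hη]; exact hr₀R _ (by linarith [hδb])
    have c3 : 0 < ‖xi2 a₂ b₂ X Y Z - xi2 a₂ b₂ x₀ y₀ z₀‖ := by
      rw [hXxi2]; linarith [hDlow]
    have c4 : ENNReal.ofReal (‖xi2 a₂ b₂ X Y Z - xi2 a₂ b₂ x₀ y₀ z₀‖) < R := by
      rw [hXxi2]; exact hr₀R _ (by linarith [hDup])
    have hmem : zeta a₁ a₂ b₁ b₂ X Y Z ∈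
        K0 a₁ a₂ b₁ b₂ (xi1 a₁ b₁ x₀ y₀ z₀) (xi2 a₂ b₂ x₀ y₀ z₀) R :=
      ⟨X, Y, Z, rfl, c1, c2, c3, c4⟩
    have hdist : hnorm (zeta a₁ a₂ b₁ b₂ X Y Z -
        (zeta a₁ a₂ b₁ b₂ x₀ y₀ z₀ + zeta a₁ a₂ b₁ b₂ (s1*u) (s1*v) (s1*t))) < δ₁ := by
      rw [zeta_add, zeta_sub]
      have hXe : X - (x₀ + s1*u) = η.re*p1 + η.im*q1 := by rw [hX]; ring
      have hYe : Y - (y₀ + s1*v) = η.re*p2 + η.im*q2 := by rw [hY]; ring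
      have hZe : Z - (z₀ + s1*t) = η.re*p3 + η.im*q3 := by rw [hZ]; ring
      rw [hXe, hYe, hZe, zeta_eq, xi1_comb2, xi2_comb2, ← hp, ← hq]
      have hid : (η.re:ℂ) * 1 + (η.im:ℂ) * Complex.I = η := by
        rw [mul_one]; exact Complex.re_add_im η
      rw [hid, ← hg]
      calc hnorm (η • e1 + g • e2) ≤ ‖η‖ + ‖g‖ := hnorm_pair_le _ _
        _ ≤ ‖η‖ + C1 * ‖η‖ := by linarith [habsg]
        _ = (C1+1) * ‖η‖ := by ring
        _ < (C1+1) * (δ₁/(C1+1)) := by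
            exact mul_lt_mul_of_pos_left hδa (by linarith)
        _ = δ₁ := by field_simp
    have hΦval := hΦ X Y Z c1 c2 c3 c4
    have hΦA := hδ₁ _ hmem hdist
    constructor
    · calc ‖F₁ ξ - coord1 A₁‖
          = ‖coord1 (Φ (zeta a₁ a₂ b₁ b₂ X Y Z) - A₁)‖ := by
            rw [coord1_sub, hΦval, coord1_combo, hXxi1]
        _ ≤ hnorm _ := abs_coord1_le _
        _ < ε := hΦA
    · calc ‖F₃ ξ - coord3 A₁‖
          = ‖coord3 (Φ (zeta a₁ a₂ b₁ b₂ X Y Z) - A₁)‖ := by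
            rw [coord3_sub, hΦval, coord3_combo, hXxi1]
        _ ≤ hnorm _ := abs_coord3_le _
        _ < ε := hΦA
  ------------------------------------------------------------------
  -- SIDE 2 : a singular point on the line L² and the limit of F₂, F₄
  ------------------------------------------------------------------
  obtain ⟨u', v', t', hkerraw', hne'⟩ := exists_ker a₂ b₂
  have hker2 : xi2 a₂ b₂ u' v' t' = 0 := hkerraw'
  have hτ0' : xi1 a₁ b₁ u' v' t' ≠ 0 := by
    intro h
    apply hne'
    apply hind
    show zeta a₁ a₂ b₁ b₂ u' v' t' = 0
    rw [zeta_eq, hker2, h]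
    module
  set τa' := ‖xi1 a₁ b₁ u' v' t'‖ with hτadef'
  have hτap' : 0 < τa' := norm_pos_iff.mpr hτ0'
  set s2 := r₀ / (2 * τa') with hs2def
  have hs2p : 0 < s2 := by rw [hs2def]; positivity
  have h1z' : xi2 a₂ b₂ (s2*u') (s2*v') (s2*t') = 0 := by rw [xi2_smul, hker2, mul_zero]
  have h2v' : xi1 a₁ b₁ (s2*u') (s2*v') (s2*t') = (s2:ℂ) * xi1 a₁ b₁ u' v' t' :=
    xi1_smul _ _ _ _ _ _
  have h2abs' : ‖xi1 a₁ b₁ (s2*u') (s2*v') (s2*t')‖ = r₀/2 := by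
    rw [h2v', norm_mul, Complex.norm_real, Real.norm_eq_abs, abs_of_pos hs2p, ← hτadef', hs2def]
    field_simp
  have hzne2 : zeta a₁ a₂ b₁ b₂ (s2*u') (s2*v') (s2*t') ≠ 0 := by
    intro h0
    obtain ⟨hu, hv, ht⟩ := hind (s2*u') (s2*v') (s2*t') h0
    exact hne' ⟨(mul_eq_zero.mp hu).resolve_left hs2p.ne',
      (mul_eq_zero.mp hv).resolve_left hs2p.ne',
      (mul_eq_zero.mp ht).resolve_left hs2p.ne'⟩
  obtain ⟨A₂, hA₂⟩ := hlim (s2*u') (s2*v') (s2*t') (Or.inr h1z')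
    (by rw [h2abs']; exact hr₀R _ (by linarith))
    (by rw [h1z']; simpa using hR)
    hzne2
  obtain ⟨p1', p2', p3', hp'⟩ := hsurj2 1
  obtain ⟨q1', q2', q3', hq'⟩ := hsurj2 Complex.I
  set C2 := ‖xi1 a₁ b₁ p1' p2' p3'‖ + ‖xi1 a₁ b₁ q1' q2' q3'‖ + 1 with hC2def
  have hC2p : 1 ≤ C2 := by
    have h3 := norm_nonneg (xi1 a₁ b₁ p1' p2' p3')
    have h4 := norm_nonneg (xi1 a₁ b₁ q1' q2' q3')
    rw [hC2def]; linarith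
  have hC2pos : (0:ℝ) < C2 := by linarith
  have key2 : ∀ ε > (0:ℝ), ∃ δ > (0:ℝ), ∀ ξ : ℂ,
      0 < ‖ξ - xi2 a₂ b₂ x₀ y₀ z₀‖ →
      ‖ξ - xi2 a₂ b₂ x₀ y₀ z₀‖ < δ →
      ‖F₂ ξ - coord2 A₂‖ < ε ∧ ‖F₄ ξ - coord4 A₂‖ < ε := by
    intro ε hε
    obtain ⟨δ₁, hδ₁p, hδ₁⟩ := hA₂ ε hε
    refine ⟨min (δ₁ / (C2+1)) (min r₀ (r₀ / (4*C2))), by positivity, fun ξ hξpos hξlt => ?_⟩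
    have hδa : ‖ξ - xi2 a₂ b₂ x₀ y₀ z₀‖ < δ₁ / (C2+1) :=
      lt_of_lt_of_le hξlt (min_le_left _ _)
    have hδb : ‖ξ - xi2 a₂ b₂ x₀ y₀ z₀‖ < r₀ :=
      lt_of_lt_of_le hξlt ((min_le_right _ _).trans (min_le_left _ _))
    have hδc : ‖ξ - xi2 a₂ b₂ x₀ y₀ z₀‖ < r₀ / (4*C2) :=
      lt_of_lt_of_le hξlt ((min_le_right _ _).trans (min_le_right _ _))
    set η := ξ - xi2 a₂ b₂ x₀ y₀ z₀ with hη
    set X := x₀ + s2*u' + η.re*p1' + η.im*q1' with hX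
    set Y := y₀ + s2*v' + η.re*p2' + η.im*q2' with hY
    set Z := z₀ + s2*t' + η.re*p3' + η.im*q3' with hZ
    have hXxi2 : xi2 a₂ b₂ X Y Z = ξ := by
      rw [hX, hY, hZ, xi2_comb, h1z', ← hp', ← hq']
      have h := Complex.re_add_im η
      linear_combination h + hη
    set g := (η.re:ℂ) * xi1 a₁ b₁ p1' p2' p3' + (η.im:ℂ) * xi1 a₁ b₁ q1' q2' q3' with hg
    have hXxi1 : xi1 a₁ b₁ X Y Z - xi1 a₁ b₁ x₀ y₀ z₀ =
        (s2:ℂ) * xi1 a₁ b₁ u' v' t' + g := by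
      rw [hX, hY, hZ, xi1_comb, h2v', hg]; ring
    have habsg : ‖g‖ ≤ C2 * ‖η‖ := by
      rw [hg]
      calc ‖(η.re:ℂ) * xi1 a₁ b₁ p1' p2' p3' + (η.im:ℂ) * xi1 a₁ b₁ q1' q2' q3'‖
          ≤ ‖(η.re:ℂ) * xi1 a₁ b₁ p1' p2' p3'‖ +
            ‖(η.im:ℂ) * xi1 a₁ b₁ q1' q2' q3'‖ := norm_add_le _ _
        _ = |η.re| * ‖xi1 a₁ b₁ p1' p2' p3'‖ +
            |η.im| * ‖xi1 a₁ b₁ q1' q2' q3'‖ := by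
            rw [norm_mul, norm_mul, Complex.norm_real, Complex.norm_real, Real.norm_eq_abs, Real.norm_eq_abs]
        _ ≤ C2 * ‖η‖ := by
            have h1 := Complex.abs_re_le_norm η
            have h2 := Complex.abs_im_le_norm η
            have h3 := norm_nonneg (xi1 a₁ b₁ p1' p2' p3')
            have h4 := norm_nonneg (xi1 a₁ b₁ q1' q2' q3')
            have h5 := norm_nonneg η
            have h6 := abs_nonneg η.re
            have h7 := abs_nonneg η.im
            rw [hC2def]
            nlinarith [mul_le_mul_of_nonneg_right h1 h3, mul_le_mul_of_nonneg_right h2 h4]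
    have habsg' : ‖g‖ < r₀ / 4 := by
      have h := mul_lt_mul_of_pos_left hδc hC2pos
      have h2 : C2 * (r₀ / (4*C2)) = r₀/4 := by field_simp
      calc ‖g‖ ≤ C2 * ‖η‖ := habsg
        _ < C2 * (r₀ / (4*C2)) := h
        _ = r₀/4 := h2
    have habs_sτ : ‖(s2:ℂ) * xi1 a₁ b₁ u' v' t'‖ = r₀/2 := by
      rw [← h2v']; exact h2abs'
    have hDlow : r₀/4 ≤ ‖(s2:ℂ) * xi1 a₁ b₁ u' v' t' + g‖ := by
      have h := norm_add_le ((s2:ℂ) * xi1 a₁ b₁ u' v' t' + g) (-g)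
      rw [show (s2:ℂ) * xi1 a₁ b₁ u' v' t' + g + -g = (s2:ℂ) * xi1 a₁ b₁ u' v' t' by ring,
        norm_neg, habs_sτ] at h
      linarith [habsg'.le]
    have hDup : ‖(s2:ℂ) * xi1 a₁ b₁ u' v' t' + g‖ ≤ r₀ := by
      calc ‖(s2:ℂ) * xi1 a₁ b₁ u' v' t' + g‖
          ≤ ‖(s2:ℂ) * xi1 a₁ b₁ u' v' t'‖ + ‖g‖ := norm_add_le _ _
        _ ≤ r₀/2 + r₀/4 := by rw [habs_sτ]; linarith [habsg'.le]
        _ ≤ r₀ := by linarith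
    have c3 : 0 < ‖xi2 a₂ b₂ X Y Z - xi2 a₂ b₂ x₀ y₀ z₀‖ := by
      rw [hXxi2, ← hη]; exact hξpos
    have c4 : ENNReal.ofReal (‖xi2 a₂ b₂ X Y Z - xi2 a₂ b₂ x₀ y₀ z₀‖) < R := by
      rw [hXxi2, ← hη]; exact hr₀R _ (by linarith [hδb])
    have c1 : 0 < ‖xi1 a₁ b₁ X Y Z - xi1 a₁ b₁ x₀ y₀ z₀‖ := by
      rw [hXxi1]; linarith [hDlow]
    have c2 : ENNReal.ofReal (‖xi1 a₁ b₁ X Y Z - xi1 a₁ b₁ x₀ y₀ z₀‖) < R := by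
      rw [hXxi1]; exact hr₀R _ (by linarith [hDup])
    have hmem : zeta a₁ a₂ b₁ b₂ X Y Z ∈
        K0 a₁ a₂ b₁ b₂ (xi1 a₁ b₁ x₀ y₀ z₀) (xi2 a₂ b₂ x₀ y₀ z₀) R :=
      ⟨X, Y, Z, rfl, c1, c2, c3, c4⟩
    have hdist : hnorm (zeta a₁ a₂ b₁ b₂ X Y Z -
        (zeta a₁ a₂ b₁ b₂ x₀ y₀ z₀ + zeta a₁ a₂ b₁ b₂ (s2*u') (s2*v') (s2*t'))) < δ₁ := by
      rw [zeta_add, zeta_sub]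
      have hXe : X - (x₀ + s2*u') = η.re*p1' + η.im*q1' := by rw [hX]; ring
      have hYe : Y - (y₀ + s2*v') = η.re*p2' + η.im*q2' := by rw [hY]; ring
      have hZe : Z - (z₀ + s2*t') = η.re*p3' + η.im*q3' := by rw [hZ]; ring
      rw [hXe, hYe, hZe, zeta_eq, xi1_comb2, xi2_comb2, ← hp', ← hq']
      have hid : (η.re:ℂ) * 1 + (η.im:ℂ) * Complex.I = η := by
        rw [mul_one]; exact Complex.re_add_im η
      rw [hid, ← hg]
      calc hnorm (g • e1 + η • e2) ≤ ‖g‖ + ‖η‖ := hnorm_pair_le _ _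
        _ ≤ C2 * ‖η‖ + ‖η‖ := by linarith [habsg]
        _ = (C2+1) * ‖η‖ := by ring
        _ < (C2+1) * (δ₁/(C2+1)) := by
            exact mul_lt_mul_of_pos_left hδa (by linarith)
        _ = δ₁ := by field_simp
    have hΦval := hΦ X Y Z c1 c2 c3 c4
    have hΦA := hδ₁ _ hmem hdist
    constructor
    · calc ‖F₂ ξ - coord2 A₂‖
          = ‖coord2 (Φ (zeta a₁ a₂ b₁ b₂ X Y Z) - A₂)‖ := by
            rw [coord2_sub, hΦval, coord2_combo, hXxi2]
        _ ≤ hnorm _ := abs_coord2_le _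
        _ < ε := hΦA
    · calc ‖F₄ ξ - coord4 A₂‖
          = ‖coord4 (Φ (zeta a₁ a₂ b₁ b₂ X Y Z) - A₂)‖ := by
            rw [coord4_sub, hΦval, coord4_combo, hXxi2]
        _ ≤ hnorm _ := abs_coord4_le _
        _ < ε := hΦA
  ------------------------------------------------------------------
  -- assembling the limit at ζ₀
  ------------------------------------------------------------------
  refine ⟨coord1 A₁ • e1 + coord2 A₂ • e2 + coord3 A₁ • e3 + coord4 A₂ • e4, ?_⟩
  intro ε hε
  obtain ⟨δ₁, hδ₁p, hkey1⟩ := key1 (ε/2) (by linarith)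
  obtain ⟨δ₂, hδ₂p, hkey2⟩ := key2 (ε/2) (by linarith)
  refine ⟨min δ₁ δ₂, lt_min hδ₁p hδ₂p, ?_⟩
  rintro q ⟨x, y, z, rfl, hc1, hc2, hc3, hc4⟩ hdist
  have hsub : zeta a₁ a₂ b₁ b₂ x y z - zeta a₁ a₂ b₁ b₂ x₀ y₀ z₀ =
      (xi1 a₁ b₁ x y z - xi1 a₁ b₁ x₀ y₀ z₀) • e1 +
      (xi2 a₂ b₂ x y z - xi2 a₂ b₂ x₀ y₀ z₀) • e2 := by
    rw [zeta_sub, zeta_eq, xi1_sub, xi2_sub]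
  have hb1 : ‖xi1 a₁ b₁ x y z - xi1 a₁ b₁ x₀ y₀ z₀‖ < δ₁ := by
    have h := abs1_le_hnorm_pair (xi1 a₁ b₁ x y z - xi1 a₁ b₁ x₀ y₀ z₀)
      (xi2 a₂ b₂ x y z - xi2 a₂ b₂ x₀ y₀ z₀)
    rw [← hsub] at h
    calc ‖xi1 a₁ b₁ x y z - xi1 a₁ b₁ x₀ y₀ z₀‖ ≤ _ := h
      _ < min δ₁ δ₂ := hdist
      _ ≤ δ₁ := min_le_left _ _
  have hb2 : ‖xi2 a₂ b₂ x y z - xi2 a₂ b₂ x₀ y₀ z₀‖ < δ₂ := by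
    have h := abs2_le_hnorm_pair (xi1 a₁ b₁ x y z - xi1 a₁ b₁ x₀ y₀ z₀)
      (xi2 a₂ b₂ x y z - xi2 a₂ b₂ x₀ y₀ z₀)
    rw [← hsub] at h
    calc ‖xi2 a₂ b₂ x y z - xi2 a₂ b₂ x₀ y₀ z₀‖ ≤ _ := h
      _ < min δ₁ δ₂ := hdist
      _ ≤ δ₂ := min_le_right _ _
  have hd1 : 0 < ‖xi1 a₁ b₁ x y z - xi1 a₁ b₁ x₀ y₀ z₀‖ := hc1
  obtain ⟨hF1b, hF3b⟩ := hkey1 (xi1 a₁ b₁ x y z) (by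
    have : xi1 a₁ b₁ x y z - xi1 a₁ b₁ x₀ y₀ z₀ = xi1 a₁ b₁ x y z - xi1 a₁ b₁ x₀ y₀ z₀ := rfl
    exact hc1) hb1
  obtain ⟨hF2b, hF4b⟩ := hkey2 (xi2 a₂ b₂ x y z) hc3 hb2
  rw [hΦ x y z hc1 hc2 hc3 hc4]
  have hdiff : (F₁ (xi1 a₁ b₁ x y z) • e1 + F₂ (xi2 a₂ b₂ x y z) • e2 +
      F₃ (xi1 a₁ b₁ x y z) • e3 + F₄ (xi2 a₂ b₂ x y z) • e4) -
      (coord1 A₁ • e1 + coord2 A₂ • e2 + coord3 A₁ • e3 + coord4 A₂ • e4) =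
      (F₁ (xi1 a₁ b₁ x y z) - coord1 A₁) • e1 + (F₂ (xi2 a₂ b₂ x y z) - coord2 A₂) • e2 +
      (F₃ (xi1 a₁ b₁ x y z) - coord3 A₁) • e3 + (F₄ (xi2 a₂ b₂ x y z) - coord4 A₂) • e4 := by
    module
  rw [hdiff, hnorm_combo]
  rw [Real.sqrt_lt' hε]
  have n1 := norm_nonneg (F₁ (xi1 a₁ b₁ x y z) - coord1 A₁)
  have n2 := norm_nonneg (F₂ (xi2 a₂ b₂ x y z) - coord2 A₂)
  have n3 := norm_nonneg (F₃ (xi1 a₁ b₁ x y z) - coord3 A₁)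
  have n4 := norm_nonneg (F₄ (xi2 a₂ b₂ x y z) - coord4 A₂)
  nlinarith [hF1b, hF2b, hF3b, hF4b]
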